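/- Let V and W be real inner product spaces, let a : V × V → ℝ and b : V × W → ℝ be bilinear maps, let μ > 0, K ≥ 0, C_a ≥ 0, β > 0, and let F : V → ℝ be a linear functional with |F(v)| ≤ μK‖v‖ for all v ∈ V. Suppose |a(v,w)| ≤ C_a μ‖v‖‖w‖ for all v,w ∈ V, suppose for every q ∈ W there is a nonzero v ∈ V with b(v,q) ≥ β‖v‖‖q‖, and suppose e ∈ V and ε ∈ W satisfy a(e,v) + b(v,ε) = F(v) for all v ∈ V. Then β‖ε‖ ≤ μ(K + C_a‖e‖); in particular, if in addition b(e,q) = 0 for all q ∈ W and a(v,v) ≥ 2μ‖v‖² for all v (so that ‖e‖ ≤ K/2), then ‖ε‖ ≤ μK(1 + C_a/2)/β. (This is the abstract inf-sup duality argument behind the pressure estimate ‖ε_h‖ ≤ μ C h^k ‖u‖_{k+1} of Theorem 5.2, showing the pressure error is proportional to the viscosity μ.) -/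

import Mathlib

/-- Abstract inf-sup duality argument behind the pressure estimate
`‖ε_h‖ ≤ μ C h^k ‖u‖_{k+1}` of Theorem 5.2. -/
theorem stmt2
    {V W : Type*}
    [NormedAddCommGroup V] [InnerProductSpace ℝ V]
    [NormedAddCommGroup W] [InnerProductSpace ℝ W]
    (a : V →ₗ[ℝ] V →ₗ[ℝ] ℝ) (b : V →ₗ[ℝ] W →ₗ[ℝ] ℝ)
    (μ K Ca β : ℝ) (hμ : 0 < μ) (hK : 0 ≤ K) (hCa : 0 ≤ Ca) (hβ : 0 < β)
    (F : V →ₗ[ℝ] ℝ) (hF : ∀ v : V, |F v| ≤ μ * K * ‖v‖)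
    (habnd : ∀ v w : V, |a v w| ≤ Ca * μ * ‖v‖ * ‖w‖)
    (hinfsup : ∀ q : W, ∃ v : V, v ≠ 0 ∧ b v q ≥ β * ‖v‖ * ‖q‖)
    (e : V) (ε : W)
    (herr1 : ∀ v : V, a e v + b v ε = F v) :
    β * ‖ε‖ ≤ μ * (K + Ca * ‖e‖) ∧
      ((∀ q : W, b e q = 0) → (∀ v : V, a v v ≥ 2 * μ * ‖v‖ ^ 2) →
        ‖ε‖ ≤ μ * K * (1 + Ca / 2) / β) := by
  have hmain : β * ‖ε‖ ≤ μ * (K + Ca * ‖e‖) := by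
    obtain ⟨v, hv0, hbv⟩ := hinfsup ε
    have hvn : (0:ℝ) < ‖v‖ := norm_pos_iff.mpr hv0
    have h1 : b v ε = F v - a e v := by linarith [herr1 v]
    have h2 : β * ‖v‖ * ‖ε‖ ≤ μ * K * ‖v‖ + Ca * μ * ‖e‖ * ‖v‖ := by
      have hFv := abs_le.mp (hF v)
      have hav := abs_le.mp (habnd e v)
      nlinarith [hbv]
    have := (mul_le_mul_iff_of_pos_right hvn).mp (by nlinarith : (β * ‖ε‖) * ‖v‖ ≤ (μ * (K + Ca * ‖e‖)) * ‖v‖)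
    exact this
  refine ⟨hmain, fun hb hcoer => ?_⟩
  have he : ‖e‖ ≤ K / 2 := by
    have h1 : a e e + b e ε = F e := herr1 e
    have h2 : b e ε = 0 := hb ε
    have h3 : 2 * μ * ‖e‖ ^ 2 ≤ a e e := hcoer e
    have h4 := (abs_le.mp (hF e)).2
    have h5 : 2 * μ * ‖e‖ ^ 2 ≤ μ * K * ‖e‖ := by nlinarith
    rcases eq_or_lt_of_le (norm_nonneg e) with h | h
    · rw [← h]; positivity
    · nlinarith [mul_pos hμ h]
  have : β * ‖ε‖ ≤ μ * K * (1 + Ca / 2) := by nlinarith [mul_le_mul_of_nonneg_left he (mul_nonneg hμ.le hCa)]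
  rw [le_div_iff₀ hβ]
  linarith
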